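/- Let m, n ≥ 1, let H be a finite group of linear isometries of ℂ^m, and let v₀ ∈ ℂ^m be a unit vector with h v₀ ≠ v₀ for every h ∈ H with h ≠ 1. Let V = (ℂ^m)^n with inner product ⟨x, y⟩ = Σᵢ ⟨xᵢ, yᵢ⟩, and let G be the wreath product group of all linear isometries g of V of the form g(x₁, …, xₙ) = (h_{σ(1)} x_{σ(1)}, …, h_{σ(n)} x_{σ(n)}) for some permutation σ of {1, …, n} and h₁, …, hₙ ∈ H. Let x₀ = (u₁v₀, …, uₙv₀) where 0 < u₁ < ⋯ < uₙ are real numbers with Σ uᵢ² = 1. Take the subgroup sequence G_{2ℓ−1} = {g ∈ G : σ permutes {1,…,ℓ} and fixes all other indices, and hᵢ = 1 for i > ℓ} (1 ≤ ℓ ≤ n) and G_{2ℓ} = {g ∈ G : σ permutes {1,…,ℓ} and fixes all other indices, and hᵢ = 1 for i > ℓ+1} (1 ≤ ℓ ≤ n−1), with coset leaders CL(G_{2ℓ}/G_{2ℓ−1}) = {the isometry multiplying coordinate ℓ+1 by h and fixing all other coordinates : h ∈ H} and CL(G_{2ℓ+1}/G_{2ℓ}) = {the insertion isometries c_j sending (x₁,…,xₙ)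 to (x₁,…,x_{j−1}, x_{ℓ+1}, x_j,…,x_ℓ, x_{ℓ+2},…,xₙ) : 1 ≤ j ≤ ℓ+1}. Then the subgroup decoding algorithm decodes robustly: for every g ∈ G, every received vector r ∈ DR(g), and every greedy run d₁, …, d_{2n−1} on r, the output d_{2n−1}⋯d₁ equals g. -/

import Mathlib

open Set
open scoped Pointwise

noncomputable section

namespace GroupCode

variable {V : Type*} [NormedAddCommGroup V] [InnerProductSpace ℂ V]

/-- The group of linear isometries of a complex inner product space. -/
abbrev Iso (V : Type*) [NormedAddCommGroup V] [InnerProductSpace ℂ V] := V ≃ₗᵢ[ℂ] V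

/-- The stabilizer (isotropy) of `x₀` inside a subgroup `H`. -/
def Stab (x₀ : V) (H : Subgroup (Iso V)) : Set (Iso V) := {h | h ∈ H ∧ h x₀ = x₀}

/-- The fundamental region of a subgroup `H`. -/
def FR (x₀ : V) (H : Subgroup (Iso V)) : Set V :=
  {x | ∀ h ∈ H, h ∉ Stab x₀ H → ‖x - x₀‖ < ‖h x - x₀‖}

/-- The decoding region of a group element `g ∈ G`. -/
def DR (x₀ : V) (G : Subgroup (Iso V)) (g : Iso V) : Set V :=
  {x | ∀ a ∈ G, a ∉ Stab x₀ G * ({g} : Set (Iso V)) → ‖g x - x₀‖ < ‖a x - x₀‖}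

/-- `CL` is a set of coset leaders for `K` over `H`: a subset of `K` containing `1` and
exactly one element of each left coset of `H` in `K`. -/
def IsCosetLeaders (H K : Subgroup (Iso V)) (CL : Set (Iso V)) : Prop :=
  CL ⊆ (K : Set (Iso V)) ∧ (1 : Iso V) ∈ CL ∧ ∀ a ∈ K, ∃! c, c ∈ CL ∧ c⁻¹ * a ∈ H

/-- Greed compatibility of a set of coset leaders for `K` over `H`. -/
def GreedCompatible (x₀ : V) (H K : Subgroup (Iso V)) (CL : Set (Iso V)) : Prop :=
  ∀ x ∈ FR x₀ H, ∃ c ∈ CL, c x ∈ FR x₀ K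

/-- A coset leader `c` of `K` over `H` is minimal if `x₀ ∈ c(FR(H))`. -/
def Minimal (x₀ : V) (H : Subgroup (Iso V)) (c : Iso V) : Prop :=
  x₀ ∈ ⇑c '' FR x₀ H

/-- A coset leader `c` of `K` over `H` is region minimal if `FR(K) ⊆ c(FR(H))`. -/
def RegionMinimal (x₀ : V) (H K : Subgroup (Iso V)) (c : Iso V) : Prop :=
  FR x₀ K ⊆ ⇑c '' FR x₀ H

/-- The product `d_k ⋯ d_1`. -/
def pprod {α : Type*} [Monoid α] (d : ℕ → α) (k : ℕ) : α :=
  (List.range k).foldl (fun acc j => d (j + 1) * acc) 1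

/-- The product `cs_ℓ ⋯ cs_{k+1}` of induced coset leaders. -/
def pprodRange {α : Type*} [Monoid α] (cs : ℕ → α) (k ℓ : ℕ) : α :=
  (List.range (ℓ - k)).foldl (fun acc j => cs (k + 1 + j) * acc) 1

/-- A greedy run of the subgroup decoding algorithm on a received vector `r`:
at each step `k`, `d k ∈ CL k` minimizes the distance of `d (d_{k-1} ⋯ d_1 r)` to `x₀`
over all `d ∈ CL k`. -/
def IsGreedyRun (x₀ : V) (CL : ℕ → Set (Iso V)) (m : ℕ) (r : V) (d : ℕ → Iso V) : Prop :=
  ∀ k < m, d (k + 1) ∈ CL (k + 1) ∧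
    ∀ e ∈ CL (k + 1), ‖(d (k + 1)) ((pprod d k) r) - x₀‖ ≤ ‖e ((pprod d k) r) - x₀‖

end GroupCode

namespace GroupCode

/-- The index map realizing the insertion `(x₁,…,xₙ) ↦
(x₁,…,x_{j−1}, x_{ℓ+1}, x_j, …, x_ℓ, x_{ℓ+2}, …, xₙ)` (0-indexed: the output at
position `i` is `x (insIdx n ℓ j hℓ i)`). -/
def insIdx (n ℓ j : ℕ) (hℓ : ℓ < n) (i : Fin n) : Fin n :=
  if (i : ℕ) < j then i
  else if (i : ℕ) = j then ⟨ℓ, hℓ⟩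
  else if (i : ℕ) ≤ ℓ then ⟨(i : ℕ) - 1, Nat.lt_of_le_of_lt (Nat.sub_le _ _) i.isLt⟩
  else i

end GroupCode

namespace GroupCode

open scoped InnerProductSpace

section SDAux

theorem insIdx_val (n ℓ j : ℕ) (hℓ : ℓ < n) (i : Fin n) :
    (insIdx n ℓ j hℓ i : ℕ) =
      if (i : ℕ) < j then (i : ℕ) else if (i : ℕ) = j then ℓ
      else if (i : ℕ) ≤ ℓ then (i : ℕ) - 1 else (i : ℕ) := by
  unfold insIdx; split_ifs <;> rfl

theorem insIdx_inj (n ℓ j : ℕ) (hℓ : ℓ < n) (hj : j ≤ ℓ) :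
    Function.Injective (insIdx n ℓ j hℓ) := by
  intro a b hab
  have h := congrArg Fin.val hab
  rw [insIdx_val, insIdx_val] at h
  have := a.isLt; have := b.isLt
  apply Fin.ext
  split_ifs at h <;> omega

theorem insIdx_bij (n ℓ j : ℕ) (hℓ : ℓ < n) (hj : j ≤ ℓ) :
    Function.Bijective (insIdx n ℓ j hℓ) :=
  Finite.injective_iff_bijective.mp (insIdx_inj n ℓ j hℓ hj)

theorem sd_pprod_succ {α : Type*} [Monoid α] (d : ℕ → α) (k : ℕ) :
    pprod d (k+1) = d (k+1) * pprod d k := by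
  unfold pprod
  rw [List.range_succ, List.foldl_append]
  simp

theorem sd_mono_id {n : ℕ} (f : Fin n → Fin n) (hs : StrictMono f)
    (hb : Function.Bijective f) : ∀ p, f p = p := by
  have h : StrictMono.orderIsoOfSurjective f hs hb.2 = OrderIso.refl (Fin n) :=
    Subsingleton.elim _ _
  have h2 := StrictMono.coe_orderIsoOfSurjective f hs hb.2
  rw [h] at h2
  intro p
  exact (congrFun h2 p).symm

theorem sd_sum_two {n : ℕ} (f : Fin n → ℝ) (i j : Fin n) (hij : i ≠ j)
    (h0 : ∀ p, p ≠ i → p ≠ j → f p = 0) : ∑ p, f p = f i + f j := by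
  rw [← Finset.sum_pair hij]
  symm
  apply Finset.sum_subset (Finset.subset_univ _)
  intro p _ hp
  simp only [Finset.mem_insert, Finset.mem_singleton, not_or] at hp
  exact h0 p hp.1 hp.2

theorem sd_resym {W : Type*} [NormedAddCommGroup W] [InnerProductSpace ℂ W] (v₀ w : W) :
    (⟪w, v₀⟫_ℂ).re = (⟪v₀, w⟫_ℂ).re := by
  have := inner_re_symm (𝕜 := ℂ) w v₀; simpa [RCLike.re_to_complex] using this

theorem sd_exp {W : Type*} [NormedAddCommGroup W] [InnerProductSpace ℂ W] (v₀ w : W) (c : ℝ) :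
    ‖w - (c:ℂ)•v₀‖^2 = ‖w‖^2 - 2*c*(⟪v₀, w⟫_ℂ).re + ‖(c:ℂ)•v₀‖^2 := by
  rw [@norm_sub_sq ℂ, inner_smul_right]
  have := sd_resym v₀ w
  simp only [RCLike.re_to_complex] at *
  rw [Complex.mul_re]
  simp [this]
  ring

theorem sd_normsq {n : ℕ} {W : Type*} [NormedAddCommGroup W] [InnerProductSpace ℂ W]
    (x y : PiLp 2 (fun _ : Fin n => W)) : ‖x - y‖^2 = ∑ i, ‖x i - y i‖^2 := by
  rw [PiLp.norm_sq_eq_of_L2]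
  simp [PiLp.sub_apply]

theorem sd_compare_one {n : ℕ} {W : Type*} [NormedAddCommGroup W] [InnerProductSpace ℂ W]
    (v₀ : W) (u : Fin n → ℝ) (x₀ z z' : PiLp 2 (fun _ : Fin n => W))
    (hx₀ : ∀ i, x₀ i = (u i : ℂ) • v₀) (i0 : Fin n)
    (hagree : ∀ p, p ≠ i0 → z p = z' p) (hnn : ‖z i0‖ = ‖z' i0‖) :
    ‖z - x₀‖^2 - ‖z' - x₀‖^2
      = 2 * u i0 * ((⟪v₀, z' i0⟫_ℂ).re - (⟪v₀, z i0⟫_ℂ).re) := by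
  rw [sd_normsq, sd_normsq, ← Finset.sum_sub_distrib]
  rw [Finset.sum_eq_single i0]
  · rw [hx₀, sd_exp, sd_exp, hnn]; ring
  · intro p _ hp
    rw [hagree p hp]; ring
  · intro h; exact absurd (Finset.mem_univ i0) h

theorem sd_compare_perm {n : ℕ} {W : Type*} [NormedAddCommGroup W] [InnerProductSpace ℂ W]
    (v₀ : W) (u : Fin n → ℝ) (x₀ x z z' : PiLp 2 (fun _ : Fin n => W))
    (hx₀ : ∀ i, x₀ i = (u i : ℂ) • v₀)
    (π π' : Fin n → Fin n) (hπ : Function.Bijective π) (hπ' : Function.Bijective π')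
    (hz : ∀ i, z i = x (π i)) (hz' : ∀ i, z' i = x (π' i)) :
    ‖z - x₀‖^2 - ‖z' - x₀‖^2 =
      2 * ((∑ i, u i * (⟪v₀, x (π' i)⟫_ℂ).re) - ∑ i, u i * (⟪v₀, x (π i)⟫_ℂ).re) := by
  have key : ∀ (ρ : Fin n → Fin n) (w : PiLp 2 (fun _ : Fin n => W)),
      (∀ i, w i = x (ρ i)) →
      ‖w - x₀‖^2 = (∑ i, ‖x (ρ i)‖^2) + (∑ i, ‖((u i : ℝ):ℂ)•v₀‖^2)
        - 2 * ∑ i, u i * (⟪v₀, x (ρ i)⟫_ℂ).re := by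
    intro ρ w hw
    rw [sd_normsq]
    have : ∀ i : Fin n, ‖w i - x₀ i‖^2
        = ‖x (ρ i)‖^2 - 2*(u i)*(⟪v₀, x (ρ i)⟫_ℂ).re + ‖((u i : ℝ):ℂ)•v₀‖^2 := by
      intro i; rw [hw, hx₀]; exact sd_exp v₀ _ (u i)
    rw [Finset.sum_congr rfl (fun i _ => this i)]
    simp_rw [mul_assoc]
    rw [Finset.sum_add_distrib, Finset.sum_sub_distrib, ← Finset.mul_sum]
    ring
  rw [key π z hz, key π' z' hz', hπ.sum_comp (fun i => ‖x i‖^2),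
    hπ'.sum_comp (fun i => ‖x i‖^2)]
  ring

theorem sd_insert_max {n : ℕ} (ℓ : ℕ) (hℓn : ℓ < n) (u s : Fin n → ℝ)
    (hu : StrictMono u)
    (jstar j : ℕ) (hjs : jstar ≤ ℓ) (hj : j ≤ ℓ) (hne : j ≠ jstar)
    (hlow : ∀ p : Fin n, (p:ℕ) < jstar → s p < s ⟨ℓ, hℓn⟩)
    (hhigh : ∀ p : Fin n, jstar ≤ (p:ℕ) → (p:ℕ) < ℓ → s ⟨ℓ, hℓn⟩ < s p) :
    ∑ i, u i * s (insIdx n ℓ j hℓn i) < ∑ i, u i * s (insIdx n ℓ jstar hℓn i) := by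
  set E : ℕ → ℝ := fun a => ∑ i, u i * s (insIdx n ℓ a hℓn i) with hE
  have adj : ∀ a, ∀ _ : a + 1 ≤ ℓ, E (a+1) - E a =
      (u ⟨a+1, by omega⟩ - u ⟨a, by omega⟩) * (s ⟨ℓ, hℓn⟩ - s ⟨a, by omega⟩) := by
    intro a ha
    have han : a < n := by omega
    have han1 : a + 1 < n := by omega
    have hd : ∀ i : Fin n, i ≠ ⟨a, han⟩ → i ≠ ⟨a+1, han1⟩ →
        u i * s (insIdx n ℓ (a+1) hℓn i) - u i * s (insIdx n ℓ a hℓn i) = 0 := by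
      intro i h1 h2
      have hv1 : (i:ℕ) ≠ a := fun h => h1 (Fin.ext h)
      have hv2 : (i:ℕ) ≠ a+1 := fun h => h2 (Fin.ext h)
      have : insIdx n ℓ (a+1) hℓn i = insIdx n ℓ a hℓn i := by
        apply Fin.ext; rw [insIdx_val, insIdx_val]; split_ifs <;> omega
      rw [this]; ring
    have hsum := sd_sum_two
      (fun i => u i * s (insIdx n ℓ (a+1) hℓn i) - u i * s (insIdx n ℓ a hℓn i))
      ⟨a, han⟩ ⟨a+1, han1⟩ (Fin.ne_of_val_ne (by simp)) hd
    have hEd : E (a+1) - E a = ∑ i, (u i * s (insIdx n ℓ (a+1) hℓn i)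
        - u i * s (insIdx n ℓ a hℓn i)) := by
      rw [Finset.sum_sub_distrib]
    have e1 : insIdx n ℓ (a+1) hℓn ⟨a, han⟩ = ⟨a, han⟩ := by
      apply Fin.ext; rw [insIdx_val]; simp
    have e2 : insIdx n ℓ a hℓn ⟨a, han⟩ = ⟨ℓ, hℓn⟩ := by
      apply Fin.ext; rw [insIdx_val]; simp
    have e3 : insIdx n ℓ (a+1) hℓn ⟨a+1, han1⟩ = ⟨ℓ, hℓn⟩ := by
      apply Fin.ext; rw [insIdx_val]; simp
    have e4 : insIdx n ℓ a hℓn ⟨a+1, han1⟩ = ⟨a, han⟩ := by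
      apply Fin.ext; rw [insIdx_val]; simp only [Fin.val_mk]
      split_ifs <;> omega
    rw [hEd, hsum]
    simp only [e1, e2, e3, e4]
    ring
  have incr : ∀ a, a < jstar → E a < E (a + 1) := by
    intro a ha
    have h1 : a + 1 ≤ ℓ := by omega
    have := adj a h1
    have hup : u ⟨a, by omega⟩ < u ⟨a+1, by omega⟩ := hu (by simp [Fin.lt_def])
    have hsp : s ⟨a, by omega⟩ < s ⟨ℓ, hℓn⟩ := hlow _ ha
    nlinarith [this]
  have decr : ∀ a, jstar ≤ a → a < ℓ → E (a + 1) < E a := by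
    intro a ha hal
    have h1 : a + 1 ≤ ℓ := by omega
    have := adj a h1
    have hup : u ⟨a, by omega⟩ < u ⟨a+1, by omega⟩ := hu (by simp [Fin.lt_def])
    have hsp : s ⟨ℓ, hℓn⟩ < s ⟨a, by omega⟩ := hhigh _ ha hal
    nlinarith [this]
  rcases Nat.lt_or_ge j jstar with hlt | hge
  · have : ∀ b, b ≤ jstar → ∀ a, a < b → E a < E b := by
      intro b
      induction b with
      | zero => intro _ a ha; omega
      | succ c ih =>
        intro hb a ha
        rcases Nat.lt_or_ge a c with h | h
        · exact lt_trans (ih (by omega) a h) (incr c (by omega))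
        · have : a = c := by omega
          subst this; exact incr a (by omega)
    exact this jstar le_rfl j hlt
  · have hlt : jstar < j := by omega
    have : ∀ b, b ≤ ℓ → jstar < b → E b < E jstar := by
      intro b
      induction b with
      | zero => intro _ h; omega
      | succ c ih =>
        intro hb hc
        rcases Nat.lt_or_ge jstar c with h | h
        · exact lt_trans (decr c (by omega) (by omega)) (ih (by omega) h)
        · have : jstar = c := by omega
          subst this; exact decr jstar le_rfl (by omega)
    exact this j hj hlt

theorem sd_seg {n ℓ : ℕ} (hℓn : ℓ < n) (w : Fin n → Fin n) (hw : Function.Injective w)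
    (hmono : ∀ p q : Fin n, p < q → (q:ℕ) < ℓ → w p < w q) :
    ∃ jstar ≤ ℓ, ∀ q : Fin n, (q:ℕ) < ℓ → (w q < w ⟨ℓ, hℓn⟩ ↔ (q:ℕ) < jstar) := by
  classical
  set lF : Fin n := ⟨ℓ, hℓn⟩ with hlF
  set T : Finset (Fin n) := (Finset.Iio lF).filter (fun p => w p < w lF) with hT
  refine ⟨T.card, ?_, ?_⟩
  · calc T.card ≤ (Finset.Iio lF).card := Finset.card_filter_le _ _
      _ = ℓ := Fin.card_Iio lF
  · intro q hq
    constructor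
    · intro hwq
      have hsub : Finset.Iic q ⊆ T := by
        intro p hp
        rw [Finset.mem_Iic] at hp
        rw [hT, Finset.mem_filter, Finset.mem_Iio]
        constructor
        · exact lt_of_le_of_lt hp (by rw [Fin.lt_def, hlF]; exact hq)
        · rcases lt_or_eq_of_le hp with h | h
          · exact lt_trans (hmono p q h hq) hwq
          · rw [h]; exact hwq
      have := Finset.card_le_card hsub
      rw [Fin.card_Iic] at this
      omega
    · intro hcard
      by_contra hwq
      have hne : w q ≠ w lF := fun h => by
        have := hw h
        rw [hlF] at this
        have := congrArg Fin.val this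
        simp at this
        omega
      have hgt : w lF < w q := lt_of_le_of_ne (not_lt.mp hwq) hne.symm
      have hsub : T ⊆ Finset.Iio q := by
        intro p hp
        rw [hT, Finset.mem_filter, Finset.mem_Iio] at hp
        rw [Finset.mem_Iio]
        by_contra hpq
        rcases lt_or_eq_of_le (not_lt.mp hpq) with h | h
        · exact absurd (hmono q p h hp.1) (not_lt.mpr (le_of_lt (lt_trans hp.2 hgt)))
        · rw [← h] at hp
          exact absurd hp.2 (not_lt.mpr (le_of_lt hgt))
      have := Finset.card_le_card hsub
      rw [Fin.card_Iio] at this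
      omega

/-- The wreath-type isometry on `PiLp 2` given by a permutation and componentwise isometries. -/
def wrIso {n : ℕ} {W : Type*} [NormedAddCommGroup W] [InnerProductSpace ℂ W]
    (e : Equiv.Perm (Fin n)) (h : Fin n → (W ≃ₗᵢ[ℂ] W)) :
    Iso (PiLp 2 fun _ : Fin n => W) :=
  (LinearIsometryEquiv.piLpCongrRight 2 h).trans
    (LinearIsometryEquiv.piLpCongrLeft 2 ℂ W e.symm)

theorem wrIso_apply {n : ℕ} {W : Type*} [NormedAddCommGroup W] [InnerProductSpace ℂ W]
    (e : Equiv.Perm (Fin n)) (h : Fin n → (W ≃ₗᵢ[ℂ] W))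
    (x : PiLp 2 fun _ : Fin n => W) (i : Fin n) :
    wrIso e h x i = h (e i) (x (e i)) := rfl

theorem insIdx_at_lt (n ℓ j : ℕ) (hℓn : ℓ < n) (p : Fin n) (h : (p:ℕ) < j) :
    insIdx n ℓ j hℓn p = p := by
  apply Fin.ext; rw [insIdx_val]; split_ifs <;> omega

theorem insIdx_at_eq (n ℓ j : ℕ) (hℓn : ℓ < n) (p : Fin n) (h : (p:ℕ) = j) :
    insIdx n ℓ j hℓn p = ⟨ℓ, hℓn⟩ := by
  apply Fin.ext; rw [insIdx_val]; simp only [Fin.val_mk]; split_ifs <;> omega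

theorem insIdx_at_mid (n ℓ j : ℕ) (hℓn : ℓ < n) (p : Fin n)
    (h1 : j < (p:ℕ)) (h2 : (p:ℕ) ≤ ℓ) :
    insIdx n ℓ j hℓn p = ⟨(p:ℕ) - 1, lt_of_le_of_lt (Nat.sub_le _ _) p.isLt⟩ := by
  apply Fin.ext; rw [insIdx_val]; simp only [Fin.val_mk]; split_ifs <;> omega

theorem insIdx_at_gt (n ℓ j : ℕ) (hℓn : ℓ < n) (hj : j ≤ ℓ) (p : Fin n) (h : ℓ < (p:ℕ)) :
    insIdx n ℓ j hℓn p = p := by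
  apply Fin.ext; rw [insIdx_val]; split_ifs <;> omega

theorem sd_ite_apply {W : Type*} [NormedAddCommGroup W] [InnerProductSpace ℂ W]
    (P : Prop) [Decidable P] (h1 : W ≃ₗᵢ[ℂ] W) (z : W) :
    (if P then h1 else 1) z = if P then h1 z else z := by split_ifs <;> rfl

end SDAux

end GroupCode


open scoped InnerProductSpace

set_option maxHeartbeats 1600000 in


open GroupCode in
/-- **Theorem (Statement 12).** For the wreath product of a finite unitary group `H`
with `Sym(n)` acting on `(ℂ^m)^n`, with the natural subgroup sequence, coset leaders
and initial vector, the subgroup decoding algorithm decodes robustly: every greedy run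
on a received vector in the decoding region of `g` outputs `g`. -/
theorem wreath_decodes_robustly
    (m n : ℕ) (hm : 1 ≤ m) (hn : 1 ≤ n)
    (H : Subgroup ((EuclideanSpace ℂ (Fin m)) ≃ₗᵢ[ℂ] (EuclideanSpace ℂ (Fin m))))
    (hHfin : (H : Set ((EuclideanSpace ℂ (Fin m)) ≃ₗᵢ[ℂ] (EuclideanSpace ℂ (Fin m)))).Finite)
    (v₀ : EuclideanSpace ℂ (Fin m)) (hv₀ : ‖v₀‖ = 1)
    (hv₀sep : ∀ h : (EuclideanSpace ℂ (Fin m)) ≃ₗᵢ[ℂ] (EuclideanSpace ℂ (Fin m)),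
      h ∈ H → h v₀ = v₀ → h = 1)
    (u : Fin n → ℝ) (hu : ∀ i, 0 < u i) (humono : StrictMono u)
    (husum : ∑ i, (u i) ^ 2 = 1)
    (x₀ : PiLp 2 (fun _ : Fin n => EuclideanSpace ℂ (Fin m)))
    (hx₀ : ∀ i, x₀ i = (u i : ℂ) • v₀)
    (Gs : ℕ → Subgroup (Iso (PiLp 2 (fun _ : Fin n => EuclideanSpace ℂ (Fin m)))))
    (hG0 : Gs 0 = ⊥)
    (hGodd : ∀ ℓ, 1 ≤ ℓ → ℓ ≤ n →
      ∀ g : Iso (PiLp 2 (fun _ : Fin n => EuclideanSpace ℂ (Fin m))),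
        g ∈ Gs (2 * ℓ - 1) ↔
          ∃ (σ : Equiv.Perm (Fin n))
            (h : Fin n → (EuclideanSpace ℂ (Fin m)) ≃ₗᵢ[ℂ] (EuclideanSpace ℂ (Fin m))),
            (∀ i, h i ∈ H) ∧
            (∀ i : Fin n, ℓ ≤ (i : ℕ) → σ i = i) ∧
            (∀ i : Fin n, ℓ ≤ (i : ℕ) → h i = 1) ∧
            (∀ (x : PiLp 2 (fun _ : Fin n => EuclideanSpace ℂ (Fin m))) (i : Fin n),
              g x i = h (σ i) (x (σ i))))
    (hGeven : ∀ ℓ, 1 ≤ ℓ → ℓ ≤ n - 1 →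
      ∀ g : Iso (PiLp 2 (fun _ : Fin n => EuclideanSpace ℂ (Fin m))),
        g ∈ Gs (2 * ℓ) ↔
          ∃ (σ : Equiv.Perm (Fin n))
            (h : Fin n → (EuclideanSpace ℂ (Fin m)) ≃ₗᵢ[ℂ] (EuclideanSpace ℂ (Fin m))),
            (∀ i, h i ∈ H) ∧
            (∀ i : Fin n, ℓ ≤ (i : ℕ) → σ i = i) ∧
            (∀ i : Fin n, ℓ + 1 ≤ (i : ℕ) → h i = 1) ∧
            (∀ (x : PiLp 2 (fun _ : Fin n => EuclideanSpace ℂ (Fin m))) (i : Fin n),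
              g x i = h (σ i) (x (σ i))))
    (CL : ℕ → Set (Iso (PiLp 2 (fun _ : Fin n => EuclideanSpace ℂ (Fin m)))))
    (hCL1 : CL 1 = {c | ∃ h ∈ H,
      ∀ (x : PiLp 2 (fun _ : Fin n => EuclideanSpace ℂ (Fin m))) (i : Fin n),
        c x i = if (i : ℕ) = 0 then h (x i) else x i})
    (hCLeven : ∀ ℓ, 1 ≤ ℓ → ℓ ≤ n - 1 →
      CL (2 * ℓ) = {c | ∃ h ∈ H,
        ∀ (x : PiLp 2 (fun _ : Fin n => EuclideanSpace ℂ (Fin m))) (i : Fin n),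
          c x i = if (i : ℕ) = ℓ then h (x i) else x i})
    (hCLodd : ∀ ℓ, 1 ≤ ℓ → ∀ hℓn : ℓ < n,
      CL (2 * ℓ + 1) = {c | ∃ j ≤ ℓ,
        ∀ (x : PiLp 2 (fun _ : Fin n => EuclideanSpace ℂ (Fin m))) (i : Fin n),
          c x i = x (insIdx n ℓ j hℓn i)})
    (g : Iso (PiLp 2 (fun _ : Fin n => EuclideanSpace ℂ (Fin m))))
    (hg : g ∈ Gs (2 * n - 1))
    (r : PiLp 2 (fun _ : Fin n => EuclideanSpace ℂ (Fin m)))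
    (hr : r ∈ DR x₀ (Gs (2 * n - 1)) g)
    (d : ℕ → Iso (PiLp 2 (fun _ : Fin n => EuclideanSpace ℂ (Fin m))))
    (hd : IsGreedyRun x₀ CL (2 * n - 1) r d) :
    pprod d (2 * n - 1) = g := by
  classical
  obtain ⟨σg, hgf, hgH, -, -, hgform⟩ := (hGodd n hn le_rfl g).mp hg
  set y := g r with hy
  have hry : ∀ p : Fin n, hgf p (r p) = y (σg.symm p) := by
    intro p
    rw [hy]
    have := hgform r (σg.symm p)
    rw [Equiv.apply_symm_apply] at this
    exact this.symm
  -- membership criterion for the big group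
  have memG' : ∀ (a : Iso (PiLp 2 (fun _ : Fin n => EuclideanSpace ℂ (Fin m))))
      (e : Equiv.Perm (Fin n))
      (hh : Fin n → (EuclideanSpace ℂ (Fin m) ≃ₗᵢ[ℂ] EuclideanSpace ℂ (Fin m))),
      (∀ i, hh i ∈ H) → (∀ x i, a x i = hh (e i) (x (e i))) → a ∈ Gs (2*n-1) := by
    intro a e hh h1 h2
    refine (hGodd n hn le_rfl a).mpr ⟨e, hh, h1, ?_, ?_, h2⟩
    · intro i hi; exact absurd i.isLt (by omega)
    · intro i hi; exact absurd i.isLt (by omega)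
  have memG : ∀ (e : Equiv.Perm (Fin n))
      (hh : Fin n → (EuclideanSpace ℂ (Fin m) ≃ₗᵢ[ℂ] EuclideanSpace ℂ (Fin m))),
      (∀ i, hh i ∈ H) → wrIso e hh ∈ Gs (2*n-1) :=
    fun e hh h1 => memG' (wrIso e hh) e hh h1 (fun x i => wrIso_apply e hh x i)
  -- the stabilizer of x₀ is trivial
  have hstabtriv : ∀ s : Iso (PiLp 2 (fun _ : Fin n => EuclideanSpace ℂ (Fin m))),
      s ∈ Gs (2*n-1) → s x₀ = x₀ → s = 1 := by
    intro s hsG hsx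
    obtain ⟨σs, hs, hsH, -, -, hsform⟩ := (hGodd n hn le_rfl s).mp hsG
    have hσ : ∀ i, σs i = i := by
      intro i
      have h1 : s x₀ i = x₀ i := by rw [hsx]
      rw [hsform, hx₀, hx₀] at h1
      have h2 : ‖hs (σs i) ((u (σs i) : ℂ) • v₀)‖ = ‖(u i : ℂ) • v₀‖ := by rw [h1]
      rw [(hs (σs i)).norm_map, norm_smul, norm_smul, hv₀] at h2
      simp only [Complex.norm_real, Real.norm_eq_abs, mul_one] at h2
      rw [abs_of_pos (hu _), abs_of_pos (hu _)] at h2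
      exact humono.injective h2
    have hhs : ∀ i, hs i = 1 := by
      intro i
      have h1 : s x₀ i = x₀ i := by rw [hsx]
      rw [hsform, hx₀, hx₀, hσ] at h1
      rw [map_smul] at h1
      have h2 : hs i v₀ = v₀ :=
        smul_right_injective _ (Complex.ofReal_ne_zero.mpr (ne_of_gt (hu i))) h1
      exact hv₀sep (hs i) (hsH i) h2
    refine LinearIsometryEquiv.ext fun x => ?_
    apply PiLp.ext; intro i
    rw [hsform, hσ, hhs]
    rfl
  have hstab : Stab x₀ (Gs (2*n-1)) *
      ({g} : Set (Iso (PiLp 2 (fun _ : Fin n => EuclideanSpace ℂ (Fin m))))) = {g} := by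
    apply Set.Subset.antisymm
    · rintro a ⟨s, hs, g', hg', rfl⟩
      rw [Set.mem_singleton_iff] at hg'
      rw [Set.mem_singleton_iff]
      show s * g' = g
      rw [hstabtriv s hs.1 hs.2, hg', one_mul]
    · intro a ha
      rw [Set.mem_singleton_iff] at ha
      refine ⟨1, ⟨Subgroup.one_mem _, rfl⟩, g, rfl, ?_⟩
      show 1 * g = a
      rw [one_mul, ha]
  have hDR : ∀ a : Iso (PiLp 2 (fun _ : Fin n => EuclideanSpace ℂ (Fin m))),
      a ∈ Gs (2*n-1) → a ≠ g → ‖y - x₀‖ < ‖a r - x₀‖ := by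
    intro a haG hne
    have : a ∉ Stab x₀ (Gs (2*n-1)) * ({g} : Set _) := by
      rw [hstab]; exact hne
    exact hr a haG this
  have hFRb : ∀ b : Iso (PiLp 2 (fun _ : Fin n => EuclideanSpace ℂ (Fin m))),
      b ∈ Gs (2*n-1) → b ≠ 1 → ‖y - x₀‖ < ‖b y - x₀‖ := by
    intro b hbG hb1
    have h1 : b * g ∈ Gs (2*n-1) := mul_mem hbG hg
    have h2 : b * g ≠ g := fun h =>
      hb1 (mul_right_cancel (h.trans (one_mul g).symm))
    exact hDR (b * g) h1 h2
  set t : Fin n → ℝ := fun i => (⟪v₀, y i⟫_ℂ).re with ht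
  -- F1 : alignment separation
  have hF1 : ∀ (i : Fin n) (h' : EuclideanSpace ℂ (Fin m) ≃ₗᵢ[ℂ] EuclideanSpace ℂ (Fin m)),
      h' ∈ H → h' ≠ 1 → (⟪v₀, h' (y i)⟫_ℂ).re < t i := by
    intro i h' hH' hne
    set fam : Fin n → (EuclideanSpace ℂ (Fin m) ≃ₗᵢ[ℂ] EuclideanSpace ℂ (Fin m)) :=
      fun p => if p = i then h' else 1 with hfam
    set b := wrIso (1 : Equiv.Perm (Fin n)) fam with hb
    have hbG : b ∈ Gs (2*n-1) := memG 1 fam (by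
      intro p; rw [hfam]; dsimp only; split_ifs
      exacts [hH', H.one_mem])
    have hbapp : ∀ (x : PiLp 2 (fun _ : Fin n => EuclideanSpace ℂ (Fin m))) p,
        b x p = fam p (x p) := by
      intro x p
      rw [hb, wrIso_apply]
      rfl
    have hb1 : b ≠ 1 := by
      intro hbeq
      obtain ⟨wv, hwv⟩ : ∃ wv, h' wv ≠ wv := by
        by_contra hcon; push_neg at hcon
        exact hne (LinearIsometryEquiv.ext hcon)
      have hcc : b (WithLp.toLp 2 (fun _ => wv)) i = (WithLp.toLp 2 (fun _ => wv) : PiLp 2 _) i := by rw [hbeq]; rfl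
      rw [hbapp] at hcc
      rw [hfam] at hcc; simp only [if_pos rfl] at hcc
      exact hwv hcc
    have hlt := hFRb b hbG hb1
    have hsq : ‖y - x₀‖^2 < ‖b y - x₀‖^2 :=
      pow_lt_pow_left₀ hlt (norm_nonneg _) (two_ne_zero)
    have hbyi : b y i = h' (y i) := by rw [hbapp, hfam]; simp
    have hcomp := sd_compare_one v₀ u x₀ (b y) y hx₀ i
      (fun p hp => by rw [hbapp, hfam]; simp [if_neg hp])
      (by rw [hbyi]; simp)
    rw [hbyi] at hcomp
    have hpos := hu i
    simp only [ht]
    nlinarith [hcomp, hsq]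
  -- F2 : ordering
  have hF2 : StrictMono t := by
    intro i j hij
    set b := wrIso (Equiv.swap i j) (fun _ : Fin n => (1 : EuclideanSpace ℂ (Fin m) ≃ₗᵢ[ℂ] EuclideanSpace ℂ (Fin m))) with hb
    have hbG : b ∈ Gs (2*n-1) := memG _ _ (fun _ => H.one_mem)
    have hbapp : ∀ (x : PiLp 2 (fun _ : Fin n => EuclideanSpace ℂ (Fin m))) p,
        b x p = x (Equiv.swap i j p) := by
      intro x p; rw [hb, wrIso_apply]; rfl
    have hv0ne : v₀ ≠ 0 := by
      intro h0; rw [h0, norm_zero] at hv₀; exact one_ne_zero hv₀.symm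
    have hb1 : b ≠ 1 := by
      intro hbeq
      set xx : PiLp 2 (fun _ : Fin n => EuclideanSpace ℂ (Fin m)) :=
        WithLp.toLp 2 (fun p => if p = i then v₀ else 0) with hxx
      have h1 : b xx j = xx j := by rw [hbeq]; rfl
      rw [hbapp, Equiv.swap_apply_right] at h1
      rw [hxx] at h1
      simp only [PiLp.toLp_apply, if_pos rfl, if_neg hij.ne'] at h1
      exact hv0ne h1
    have hlt := hFRb b hbG hb1
    have hsq : ‖y - x₀‖^2 < ‖b y - x₀‖^2 :=
      pow_lt_pow_left₀ hlt (norm_nonneg _) two_ne_zero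
    have hcomp := sd_compare_perm v₀ u x₀ y (b y) y hx₀
      (fun p => Equiv.swap i j p) (fun p => p) (Equiv.bijective _)
      ⟨fun a b h => h, fun a => ⟨a, rfl⟩⟩
      (fun p => hbapp y p) (fun p => rfl)
    beta_reduce at hcomp
    have hsupp := sd_sum_two
      (fun p => u p * (⟪v₀, y p⟫_ℂ).re - u p * (⟪v₀, y (Equiv.swap i j p)⟫_ℂ).re) i j hij.ne
      (fun p hpi hpj => by beta_reduce; rw [Equiv.swap_apply_of_ne_of_ne hpi hpj]; ring)
    have hsupp2 : (∑ p, u p * (⟪v₀, y p⟫_ℂ).re)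
        - (∑ p, u p * (⟪v₀, y (Equiv.swap i j p)⟫_ℂ).re)
        = (u i * (⟪v₀, y i⟫_ℂ).re - u i * (⟪v₀, y (Equiv.swap i j i)⟫_ℂ).re)
          + (u j * (⟪v₀, y j⟫_ℂ).re - u j * (⟪v₀, y (Equiv.swap i j j)⟫_ℂ).re) := by
      rw [← Finset.sum_sub_distrib]
      exact hsupp
    rw [Equiv.swap_apply_left, Equiv.swap_apply_right] at hsupp2
    have hd2 : 0 < ‖b y - x₀‖^2 - ‖y - x₀‖^2 := by linarith
    rw [hcomp] at hd2
    rw [hsupp2] at hd2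
    have huij := humono hij
    simp only [ht]
    nlinarith [hd2]
  -- main invariant by induction
  have main : ∀ ℓ, 1 ≤ ℓ → ℓ ≤ n → ∃ w : Fin n → Fin n, Function.Bijective w ∧
      (∀ p : Fin n, ℓ ≤ (p:ℕ) → w p = σg.symm p) ∧
      (∀ p q : Fin n, p < q → (q:ℕ) < ℓ → w p < w q) ∧
      (∀ p : Fin n, (p:ℕ) < ℓ → (pprod d (2*ℓ-1)) r p = y (w p)) ∧
      (∀ p : Fin n, ℓ ≤ (p:ℕ) → (pprod d (2*ℓ-1)) r p = r p) := by
    intro ℓ hℓ1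
    induction ℓ, hℓ1 using Nat.le_induction with
    | base =>
      intro _
      have h0n : 0 < n := by omega
      obtain ⟨hmem, hmin⟩ := hd 0 (by omega)
      simp only [Nat.zero_add] at hmem hmin
      rw [hCL1] at hmem
      obtain ⟨h1, hh1, hform⟩ := hmem
      set i0 : Fin n := ⟨0, h0n⟩ with hi0
      set fam : Fin n → (EuclideanSpace ℂ (Fin m) ≃ₗᵢ[ℂ] EuclideanSpace ℂ (Fin m)) :=
        fun p => if (p:ℕ) = 0 then hgf i0 else 1 with hfam
      set cst := wrIso (1 : Equiv.Perm (Fin n)) fam with hcst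
      have hcstapp : ∀ (x : PiLp 2 (fun _ : Fin n => EuclideanSpace ℂ (Fin m))) (p : Fin n),
          cst x p = if (p:ℕ) = 0 then hgf i0 (x p) else x p := by
        intro x p
        rw [hcst, wrIso_apply, hfam]
        simp only [Equiv.Perm.one_apply, sd_ite_apply]
        split_ifs with hp
        exacts [congrArg (fun f : EuclideanSpace ℂ (Fin m) ≃ₗᵢ[ℂ] EuclideanSpace ℂ (Fin m) => f (x p)) (if_pos hp), congrArg (fun f : EuclideanSpace ℂ (Fin m) ≃ₗᵢ[ℂ] EuclideanSpace ℂ (Fin m) => f (x p)) (if_neg hp)]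
      have hcstCL : cst ∈ CL 1 := by
        rw [hCL1]; exact ⟨hgf i0, hgH i0, hcstapp⟩
      have hminc := hmin cst hcstCL
      have hpp1 : pprod d 1 r = d 1 r := rfl
      have hpp0 : pprod d 0 r = r := rfl
      rw [hpp0] at hminc
      have hsq : ‖d 1 r - x₀‖^2 ≤ ‖cst r - x₀‖^2 :=
        pow_le_pow_left₀ (norm_nonneg _) hminc 2
      have hagree : ∀ p, p ≠ i0 → d 1 r p = cst r p := by
        intro p hp
        have hp0 : (p:ℕ) ≠ 0 := fun h => hp (Fin.ext h)
        rw [hform r p, hcstapp, if_neg hp0, if_neg hp0]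
      have hnrm : ‖d 1 r i0‖ = ‖cst r i0‖ := by
        rw [hform r i0, hcstapp, if_pos rfl, if_pos rfl,
          (h1).norm_map, (hgf i0).norm_map]
      have hcomp := sd_compare_one v₀ u x₀ (d 1 r) (cst r) hx₀ i0 hagree hnrm
      have hcsti0 : cst r i0 = y (σg.symm i0) := by
        rw [hcstapp, if_pos rfl, hry i0]
      have hre : (⟪v₀, y (σg.symm i0)⟫_ℂ).re ≤ (⟪v₀, d 1 r i0⟫_ℂ).re := by
        rw [← hcsti0]; nlinarith [hcomp, hsq, hu i0]
      set h' := h1 * (hgf i0)⁻¹ with hh'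
      have hh'H : h' ∈ H := mul_mem hh1 (inv_mem (hgH i0))
      have hh'app : h' (y (σg.symm i0)) = d 1 r i0 := by
        rw [hform r i0, if_pos rfl, ← hry i0, hh']
        show h1 ((hgf i0).symm ((hgf i0) (r i0))) = h1 (r i0)
        rw [LinearIsometryEquiv.symm_apply_apply]
      have hh'1 : h' = 1 := by
        by_contra hne'
        have hcontra := hF1 (σg.symm i0) h' hh'H hne'
        rw [hh'app] at hcontra
        simp only [ht] at hcontra
        linarith
      have hd1i0 : d 1 r i0 = y (σg.symm i0) := by
        rw [← hh'app, hh'1]; rfl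
      have h21 : 2*1-1 = 1 := by norm_num
      rw [h21]
      refine ⟨fun p => σg.symm p, σg.symm.bijective, fun p _ => rfl, ?_, ?_, ?_⟩
      · intro p q hpq hq
        exfalso
        rw [Fin.lt_def] at hpq
        omega
      · intro p hp
        have hpi : p = i0 := Fin.ext (show (p:ℕ) = 0 by omega)
        rw [hpi, hpp1]
        exact hd1i0
      · intro p hp
        rw [hpp1, hform r p, if_neg (by omega)]
    | succ ℓ hℓ1 ih =>
      intro hℓn1
      obtain ⟨w, hwb, hwτ, hwm, hX1, hX2⟩ := ih (by omega)
      have hℓn : ℓ < n := by omega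
      set lF : Fin n := ⟨ℓ, hℓn⟩ with hlF
      -- even step 2ℓ
      obtain ⟨hmem, hmin⟩ := hd (2*ℓ-1) (by omega)
      have e2 : 2*ℓ-1+1 = 2*ℓ := by omega
      rw [e2] at hmem hmin
      rw [hCLeven ℓ hℓ1 (by omega)] at hmem
      obtain ⟨h1, hh1, hform⟩ := hmem
      set X' := pprod d (2*ℓ-1) r with hX'
      set fam : Fin n → (EuclideanSpace ℂ (Fin m) ≃ₗᵢ[ℂ] EuclideanSpace ℂ (Fin m)) :=
        fun p => if (p:ℕ) = ℓ then hgf lF else 1 with hfam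
      set cst := wrIso (1 : Equiv.Perm (Fin n)) fam with hcst
      have hcstapp : ∀ (x : PiLp 2 (fun _ : Fin n => EuclideanSpace ℂ (Fin m))) (p : Fin n),
          cst x p = if (p:ℕ) = ℓ then hgf lF (x p) else x p := by
        intro x p
        rw [hcst, wrIso_apply, hfam]
        simp only [Equiv.Perm.one_apply, sd_ite_apply]
        split_ifs with hp
        exacts [congrArg (fun f : EuclideanSpace ℂ (Fin m) ≃ₗᵢ[ℂ] EuclideanSpace ℂ (Fin m) => f (x p)) (if_pos hp), congrArg (fun f : EuclideanSpace ℂ (Fin m) ≃ₗᵢ[ℂ] EuclideanSpace ℂ (Fin m) => f (x p)) (if_neg hp)]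
      have hcstCL : cst ∈ CL (2*ℓ) := by
        rw [hCLeven ℓ hℓ1 (by omega)]; exact ⟨hgf lF, hgH lF, hcstapp⟩
      have hminc := hmin cst hcstCL
      have hsq : ‖d (2*ℓ) X' - x₀‖^2 ≤ ‖cst X' - x₀‖^2 :=
        pow_le_pow_left₀ (norm_nonneg _) hminc 2
      have hXlF : X' lF = r lF := hX2 lF (le_refl ℓ)
      have hagree : ∀ p, p ≠ lF → d (2*ℓ) X' p = cst X' p := by
        intro p hp
        have hpℓ : (p:ℕ) ≠ ℓ := fun h => hp (Fin.ext h)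
        rw [hform X' p, hcstapp, if_neg hpℓ, if_neg hpℓ]
      have hnrm : ‖d (2*ℓ) X' lF‖ = ‖cst X' lF‖ := by
        rw [hform X' lF, hcstapp, if_pos rfl, if_pos rfl,
          (h1).norm_map, (hgf lF).norm_map]
      have hcomp := sd_compare_one v₀ u x₀ (d (2*ℓ) X') (cst X') hx₀ lF hagree hnrm
      have hcstlF : cst X' lF = y (σg.symm lF) := by
        rw [hcstapp, if_pos rfl, hXlF, hry lF]
      have hre : (⟪v₀, y (σg.symm lF)⟫_ℂ).re ≤ (⟪v₀, d (2*ℓ) X' lF⟫_ℂ).re := by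
        rw [← hcstlF]; nlinarith [hcomp, hsq, hu lF]
      set h' := h1 * (hgf lF)⁻¹ with hh'
      have hh'H : h' ∈ H := mul_mem hh1 (inv_mem (hgH lF))
      have hh'app : h' (y (σg.symm lF)) = d (2*ℓ) X' lF := by
        rw [hform X' lF, if_pos rfl, hXlF, ← hry lF, hh']
        show h1 ((hgf lF).symm ((hgf lF) (r lF))) = h1 (r lF)
        rw [LinearIsometryEquiv.symm_apply_apply]
      have hh'1 : h' = 1 := by
        by_contra hne'
        have hcontra := hF1 (σg.symm lF) h' hh'H hne'
        rw [hh'app] at hcontra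
        simp only [ht] at hcontra
        linarith
      have hkey : d (2*ℓ) X' lF = y (σg.symm lF) := by
        rw [← hh'app, hh'1]; rfl
      have hX2e : pprod d (2*ℓ) r = d (2*ℓ) X' := by
        have hh := sd_pprod_succ d (2*ℓ-1)
        rw [e2] at hh
        rw [hX', hh]
        rfl
      have hX2c : ∀ p : Fin n, pprod d (2*ℓ) r p
          = if (p:ℕ) = ℓ then y (σg.symm lF) else X' p := by
        intro p
        by_cases hpl : (p:ℕ) = ℓ
        · rw [if_pos hpl]
          have hplF : p = lF := Fin.ext hpl
          rw [hX2e, hplF]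
          exact hkey
        · rw [if_neg hpl, hX2e, hform X' p, if_neg hpl]
      -- odd step 2ℓ+1
      obtain ⟨hmem', hmin'⟩ := hd (2*ℓ) (by omega)
      rw [hCLodd ℓ hℓ1 hℓn] at hmem'
      obtain ⟨j, hj, hformj⟩ := hmem'
      obtain ⟨jstar, hjs, hseg⟩ := sd_seg hℓn w hwb.1 hwm
      set fam1 : Fin n → (EuclideanSpace ℂ (Fin m) ≃ₗᵢ[ℂ] EuclideanSpace ℂ (Fin m)) :=
        fun _ => 1 with hfam1
      set cst' := wrIso (Equiv.ofBijective _ (insIdx_bij n ℓ jstar hℓn hjs)) fam1 with hcst'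
      have hcst'app : ∀ (x : PiLp 2 (fun _ : Fin n => EuclideanSpace ℂ (Fin m))) (i : Fin n),
          cst' x i = x (insIdx n ℓ jstar hℓn i) := fun x i => rfl
      have hcst'CL : cst' ∈ CL (2*ℓ+1) := by
        rw [hCLodd ℓ hℓ1 hℓn]; exact ⟨jstar, hjs, hcst'app⟩
      have hminc' := hmin' cst' hcst'CL
      have hsq' : ‖d (2*ℓ+1) (pprod d (2*ℓ) r) - x₀‖^2 ≤ ‖cst' (pprod d (2*ℓ) r) - x₀‖^2 :=
        pow_le_pow_left₀ (norm_nonneg _) hminc' 2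
      have hcomp' := sd_compare_perm v₀ u x₀ (pprod d (2*ℓ) r) (d (2*ℓ+1) (pprod d (2*ℓ) r)) (cst' (pprod d (2*ℓ) r)) hx₀
        (insIdx n ℓ j hℓn) (insIdx n ℓ jstar hℓn)
        (insIdx_bij n ℓ j hℓn hj) (insIdx_bij n ℓ jstar hℓn hjs)
        (fun i => hformj (pprod d (2*ℓ) r) i) (fun i => hcst'app (pprod d (2*ℓ) r) i)
      have hwlF : w lF = σg.symm lF := hwτ lF (le_refl ℓ)
      have hslF : (pprod d (2*ℓ) r) lF = y (w lF) := by rw [hX2c, if_pos rfl, hwlF]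
      have hsp : ∀ p : Fin n, (p:ℕ) < ℓ → (pprod d (2*ℓ) r) p = y (w p) := by
        intro p hp
        rw [hX2c, if_neg (by omega), hX1 p hp]
      have hlow : ∀ p : Fin n, (p:ℕ) < jstar →
          (⟪v₀, (pprod d (2*ℓ) r) p⟫_ℂ).re < (⟪v₀, (pprod d (2*ℓ) r) lF⟫_ℂ).re := by
        intro p hp
        have hp' : (p:ℕ) < ℓ := by omega
        rw [hsp p hp', hslF]
        have := hF2 ((hseg p hp').mpr hp)
        simpa only [ht] using this
      have hhigh : ∀ p : Fin n, jstar ≤ (p:ℕ) → (p:ℕ) < ℓ →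
          (⟪v₀, (pprod d (2*ℓ) r) lF⟫_ℂ).re < (⟪v₀, (pprod d (2*ℓ) r) p⟫_ℂ).re := by
        intro p hp1 hp2
        rw [hsp p hp2, hslF]
        have hnlt : ¬ (w p < w lF) := fun hc => by
          have := (hseg p hp2).mp hc; omega
        have hne : w lF ≠ w p := by
          intro hc
          have := hwb.1 hc
          rw [hlF] at this
          have := congrArg Fin.val this
          simp at this
          omega
        have : w lF < w p := lt_of_le_of_ne (not_lt.mp hnlt) hne
        have := hF2 this
        simpa only [ht] using this
      have hjj : j = jstar := by
        by_contra hne'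
        have hins := sd_insert_max ℓ hℓn u (fun p => (⟪v₀, (pprod d (2*ℓ) r) p⟫_ℂ).re) humono
          jstar j hjs hj hne' hlow hhigh
        beta_reduce at hins
        linarith [hsq', hcomp', hins]
      have hX3e : pprod d (2*ℓ+1) r = d (2*ℓ+1) (pprod d (2*ℓ) r) := by
        rw [sd_pprod_succ d (2*ℓ)]
        rfl
      have hX3 : ∀ i : Fin n, pprod d (2*ℓ+1) r i = (pprod d (2*ℓ) r) (insIdx n ℓ jstar hℓn i) := by
        intro i
        rw [hX3e, hformj (pprod d (2*ℓ) r) i, hjj]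
      have e3 : 2*(ℓ+1)-1 = 2*ℓ+1 := by omega
      rw [e3]
      refine ⟨fun p => w (insIdx n ℓ jstar hℓn p),
        Function.Bijective.comp hwb (insIdx_bij n ℓ jstar hℓn hjs), ?_, ?_, ?_, ?_⟩
      · intro p hp
        show w (insIdx n ℓ jstar hℓn p) = σg.symm p
        rw [insIdx_at_gt n ℓ jstar hℓn hjs p (by omega)]
        exact hwτ p (by omega)
      · intro p q hpq hq
        show w (insIdx n ℓ jstar hℓn p) < w (insIdx n ℓ jstar hℓn q)
        have hpq' : (p:ℕ) < (q:ℕ) := hpq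
        have hqℓ : (q:ℕ) ≤ ℓ := by omega
        rcases Nat.lt_trichotomy (q:ℕ) jstar with h1 | h1 | h1
        · rw [insIdx_at_lt n ℓ jstar hℓn p (by omega), insIdx_at_lt n ℓ jstar hℓn q h1]
          exact hwm p q hpq (by omega)
        · rw [insIdx_at_lt n ℓ jstar hℓn p (by omega), insIdx_at_eq n ℓ jstar hℓn q h1]
          exact (hseg p (by omega)).mpr (by omega)
        · rw [insIdx_at_mid n ℓ jstar hℓn q h1 hqℓ]
          rcases Nat.lt_trichotomy (p:ℕ) jstar with h2 | h2 | h2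
          · rw [insIdx_at_lt n ℓ jstar hℓn p h2]
            exact hwm p _ (by rw [Fin.lt_def]; simp; omega) (by simp; omega)
          · rw [insIdx_at_eq n ℓ jstar hℓn p h2]
            have hq1ℓ : ((⟨(q:ℕ)-1, lt_of_le_of_lt (Nat.sub_le _ _) q.isLt⟩ : Fin n) : ℕ) < ℓ := by
              simp; omega
            have hnlt : ¬ (w ⟨(q:ℕ)-1, lt_of_le_of_lt (Nat.sub_le _ _) q.isLt⟩ < w lF) := by
              intro hc
              have := (hseg _ hq1ℓ).mp hc
              simp at this
              omega
            have hne : w lF ≠ w ⟨(q:ℕ)-1, lt_of_le_of_lt (Nat.sub_le _ _) q.isLt⟩ := by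
              intro hc
              have := hwb.1 hc
              rw [hlF] at this
              have := congrArg Fin.val this
              simp at this
              omega
            exact lt_of_le_of_ne (not_lt.mp hnlt) hne
          · rw [insIdx_at_mid n ℓ jstar hℓn p h2 (by omega)]
            exact hwm _ _ (by rw [Fin.lt_def]; simp; omega) (by simp; omega)
      · intro p hp
        rw [hX3 p]
        show (pprod d (2*ℓ) r) (insIdx n ℓ jstar hℓn p) = y (w (insIdx n ℓ jstar hℓn p))
        rcases Nat.lt_trichotomy (p:ℕ) jstar with h1 | h1 | h1
        · rw [insIdx_at_lt n ℓ jstar hℓn p h1]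
          exact hsp p (by omega)
        · rw [insIdx_at_eq n ℓ jstar hℓn p h1]
          exact hslF
        · rw [insIdx_at_mid n ℓ jstar hℓn p h1 (by omega)]
          exact hsp _ (by simp; omega)
      · intro p hp
        rw [hX3 p]
        rw [insIdx_at_gt n ℓ jstar hℓn hjs p (by omega)]
        rw [hX2c, if_neg (by omega)]
        exact hX2 p (by omega)

  -- conclusion
  obtain ⟨w, hwb, -, hwm, hX1, -⟩ := main n hn le_rfl
  have hwid : ∀ p, w p = p :=
    sd_mono_id w (fun p q h => hwm p q h q.isLt) hwb
  have hXy : (pprod d (2*n-1)) r = y := by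
    apply PiLp.ext; intro p
    rw [hX1 p p.isLt, hwid p]
  -- membership of the output in the group
  have hdG : ∀ k, 1 ≤ k → k ≤ 2*n-1 → d k ∈ Gs (2*n-1) := by
    intro k hk1 hk2
    have hmem := (hd (k-1) (by omega)).1
    have hk : k - 1 + 1 = k := by omega
    rw [hk] at hmem
    rcases Nat.even_or_odd k with ⟨c, hc⟩ | ⟨c, hc⟩
    · subst hc
      have hc1 : 1 ≤ c := by omega
      have hc2 : c ≤ n - 1 := by omega
      have h2c : c + c = 2*c := (two_mul c).symm
      rw [h2c] at hmem ⊢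
      rw [hCLeven c hc1 hc2] at hmem
      obtain ⟨h1, hh1, hform⟩ := hmem
      refine memG' (d (2*c)) 1 (fun p => if (p:ℕ) = c then h1 else 1)
        (fun p => by split_ifs; exacts [hh1, H.one_mem]) ?_
      intro x i
      rw [hform x i]
      simp only [Equiv.Perm.one_apply, sd_ite_apply]
      split_ifs with hp
      exacts [(congrArg (fun f : EuclideanSpace ℂ (Fin m) ≃ₗᵢ[ℂ] EuclideanSpace ℂ (Fin m) => f (x i)) (if_pos hp)).symm, (congrArg (fun f : EuclideanSpace ℂ (Fin m) ≃ₗᵢ[ℂ] EuclideanSpace ℂ (Fin m) => f (x i)) (if_neg (t := h1) (e := 1) hp)).symm]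
    · subst hc
      rcases Nat.eq_zero_or_pos c with hc0 | hc1
      · subst hc0
        rw [show 2*0+1 = 1 from rfl] at hmem ⊢
        rw [hCL1] at hmem
        obtain ⟨h1, hh1, hform⟩ := hmem
        refine memG' (d 1) 1 (fun p => if (p:ℕ) = 0 then h1 else 1)
          (fun p => by split_ifs; exacts [hh1, H.one_mem]) ?_
        intro x i
        rw [hform x i]
        simp only [Equiv.Perm.one_apply, sd_ite_apply]
        split_ifs with hp
        exacts [(congrArg (fun f : EuclideanSpace ℂ (Fin m) ≃ₗᵢ[ℂ] EuclideanSpace ℂ (Fin m) => f (x i)) (if_pos hp)).symm, (congrArg (fun f : EuclideanSpace ℂ (Fin m) ≃ₗᵢ[ℂ] EuclideanSpace ℂ (Fin m) => f (x i)) (if_neg (t := h1) (e := 1) hp)).symm]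
      · have hcn : c < n := by omega
        rw [hCLodd c hc1 hcn] at hmem
        obtain ⟨j, hj, hform⟩ := hmem
        refine memG' (d (2*c+1)) (Equiv.ofBijective _ (insIdx_bij n c j hcn hj))
          (fun _ => 1) (fun _ => H.one_mem) ?_
        intro x i
        rw [hform x i]
        rfl
  have haG : ∀ k, k ≤ 2*n-1 → pprod d k ∈ Gs (2*n-1) := by
    intro k
    induction k with
    | zero => intro _; exact Subgroup.one_mem _
    | succ c ih =>
      intro hc
      rw [sd_pprod_succ]
      exact mul_mem (hdG (c+1) (by omega) (by omega)) (ih (by omega))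
  by_contra hne
  have := hDR (pprod d (2*n-1)) (haG _ le_rfl) hne
  rw [hXy] at this
  exact lt_irrefl _ this
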